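/- Let E be an exact couple system over a bounded poset I, and let z ≤ p1 ≤ p2 ≤ p3 ≤ b in I. The maps ℓ : E^{p2}_{p1} → E^{p3}_{p1} and ℓ : E^{p3}_{p1} → E^{p3}_{p2} send kernels of the respective differentials d_{pqz} into kernels and images of the respective d_{bpq} into images, and hence induce homomorphisms S^{p2,z}_{b,p1} → S^{p3,z}_{b,p1} and S^{p3,z}_{b,p1} → S^{p3,z}_{b,p2}. The resulting sequence 0 → S^{p2,z}_{b,p1} → S^{p3,z}_{b,p1} → S^{p3,z}_{b,p2} → 0 is exact. -/

import Mathlib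

open Function

universe u v

/-- An exact couple system over a bounded poset `I`: abelian groups `E^p_q` for `q ≤ p`,
functorial maps `ℓ`, boundary maps `k_{pq} : E^p_q → D_q` (where `D_p := E^p_⊥`), exact
triangles `D_q → D_p → E^p_q → D_q`, and naturality of `k`. -/
structure ExactCoupleSystem (I : Type u) [PartialOrder I] [BoundedOrder I] where
  /-- the abelian groups `E^p_q` -/
  E : ∀ p q : I, q ≤ p → AddCommGrpCat.{v}
  /-- the structure maps `ℓ : E^p_q → E^{p'}_{q'}` for `p ≤ p'`, `q ≤ q'` -/
  l : ∀ {p q p' q' : I} (h : q ≤ p) (h' : q' ≤ p'), p ≤ p' → q ≤ q' →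
      (E p q h →+ E p' q' h')
  /-- the boundary maps `k_{pq} : E^p_q → D_q` -/
  k : ∀ {p q : I} (h : q ≤ p), (E p q h →+ E q ⊥ bot_le)
  l_id : ∀ {p q : I} (h : q ≤ p), l h h le_rfl le_rfl = AddMonoidHom.id _
  l_comp : ∀ {p q p' q' p'' q'' : I} (h : q ≤ p) (h' : q' ≤ p') (h'' : q'' ≤ p'')
      (hp : p ≤ p') (hq : q ≤ q') (hp' : p' ≤ p'') (hq' : q' ≤ q''),
      (l h' h'' hp' hq').comp (l h h' hp hq) = l h h'' (hp.trans hp') (hq.trans hq')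
  exact_ij : ∀ {p q : I} (h : q ≤ p),
      (l (bot_le : (⊥ : I) ≤ q) (bot_le : (⊥ : I) ≤ p) h le_rfl).range =
        (l (bot_le : (⊥ : I) ≤ p) h le_rfl bot_le).ker
  exact_jk : ∀ {p q : I} (h : q ≤ p),
      (l (bot_le : (⊥ : I) ≤ p) h le_rfl bot_le).range = (k h).ker
  exact_ki : ∀ {p q : I} (h : q ≤ p),
      (k h).range = (l (bot_le : (⊥ : I) ≤ q) (bot_le : (⊥ : I) ≤ p) h le_rfl).ker
  k_nat : ∀ {p q p' q' : I} (h : q ≤ p) (h' : q' ≤ p') (hp : p ≤ p') (hq : q ≤ q'),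
      (l (bot_le : (⊥ : I) ≤ q) (bot_le : (⊥ : I) ≤ q') hq le_rfl).comp (k h) =
        (k h').comp (l h h' hp hq)

namespace ExactCoupleSystem

variable {I : Type u} [PartialOrder I] [BoundedOrder I] (X : ExactCoupleSystem.{u, v} I)

/-- `D_p := E^p_{−∞}`. -/
abbrev D (p : I) := X.E p ⊥ bot_le

/-- `i_{qp} : D_q → D_p`. -/
def i {q p : I} (h : q ≤ p) : X.D q →+ X.D p := X.l bot_le bot_le h le_rfl

/-- `j_{pq} : D_p → E^p_q`. -/
def j {q p : I} (h : q ≤ p) : X.D p →+ X.E p q h := X.l bot_le h le_rfl bot_le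

/-- The differential `d_{pqz} = j_{qz} ∘ k_{pq} : E^p_q → E^q_z`. -/
def dd {z q p : I} (hzq : z ≤ q) (hqp : q ≤ p) : X.E p q hqp →+ X.E q z hzq :=
  (X.j hzq).comp (X.k hqp)

/-- The S-term `S^{pz}_{bq} = ker(d_{pqz}) / im(d_{bpq})` of an exact couple system. -/
abbrev Sterm {z q p b : I} (hzq : z ≤ q) (hqp : q ≤ p) (hpb : p ≤ b) :=
  ↥(X.dd hzq hqp).ker ⧸ (X.dd hqp hpb).range.addSubgroupOf (X.dd hzq hqp).ker

/-- The class in `S^{pz}_{bq}` of an element `x ∈ ker(d_{pqz})`. -/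
def Scls {z q p b : I} (hzq : z ≤ q) (hqp : q ≤ p) (hpb : p ≤ b)
    {x : X.E p q hqp} (hx : x ∈ (X.dd hzq hqp).ker) : X.Sterm hzq hqp hpb :=
  QuotientAddGroup.mk ⟨x, hx⟩

end ExactCoupleSystem

namespace ExactCoupleSystem

variable {I : Type u} [PartialOrder I] [BoundedOrder I] (X : ExactCoupleSystem.{u, v} I)

lemma l_l {p q p' q' p'' q'' : I} (h : q ≤ p) (h' : q' ≤ p') (h'' : q'' ≤ p'')
    (hp : p ≤ p') (hq : q ≤ q') (hp' : p' ≤ p'') (hq' : q' ≤ q'') (x : X.E p q h) :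
    X.l h' h'' hp' hq' (X.l h h' hp hq x) = X.l h h'' (hp.trans hp') (hq.trans hq') x :=
  DFunLike.congr_fun (X.l_comp h h' h'' hp hq hp' hq') x

lemma l_id' {p q : I} (h : q ≤ p) (x : X.E p q h) : X.l h h le_rfl le_rfl x = x := by
  rw [X.l_id]; rfl

lemma k_l {p q p' q' : I} (h : q ≤ p) (h' : q' ≤ p') (hp : p ≤ p') (hq : q ≤ q')
    (x : X.E p q h) :
    X.l bot_le bot_le hq le_rfl (X.k h x) = X.k h' (X.l h h' hp hq x) :=
  DFunLike.congr_fun (X.k_nat h h' hp hq) x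

lemma i_k {p q p' q' : I} (h : q ≤ p) (h' : q' ≤ p') (hp : p ≤ p') (hq : q ≤ q')
    (x : X.E p q h) :
    X.i hq (X.k h x) = X.k h' (X.l h h' hp hq x) :=
  X.k_l h h' hp hq x

lemma k_l_self {p q p' : I} (h : q ≤ p) (h' : q ≤ p') (hp : p ≤ p') (x : X.E p q h) :
    X.k h' (X.l h h' hp le_rfl x) = X.k h x :=
  (X.k_l h h' hp le_rfl x).symm.trans (X.l_id' bot_le _)

lemma l_j {p q p' q' : I} (h : q ≤ p) (h' : q' ≤ p') (hp : p ≤ p') (hq : q ≤ q')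
    (x : X.D p) :
    X.l h h' hp hq (X.j h x) = X.j h' (X.i hp x) := by
  have h1 := X.l_l bot_le h h' le_rfl bot_le hp hq x
  have h2 := X.l_l bot_le bot_le h' hp le_rfl le_rfl bot_le x
  exact h1.trans h2.symm

lemma i_i {p q r : I} (h : q ≤ p) (h' : p ≤ r) (x : X.D q) :
    X.i h' (X.i h x) = X.i (h.trans h') x :=
  X.l_l bot_le bot_le bot_le h le_rfl h' le_rfl x

lemma i_id {p : I} (x : X.D p) : X.i le_rfl x = x := X.l_id' bot_le x

lemma dd_apply {z q p : I} (hzq : z ≤ q) (hqp : q ≤ p) (x : X.E p q hqp) :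
    X.dd hzq hqp x = X.j hzq (X.k hqp x) := rfl

lemma exists_i_of_j_eq_zero {p q : I} (h : q ≤ p) {x : X.D p} (hx : X.j h x = 0) :
    ∃ y, X.i h y = x := by
  have hmem : x ∈ (X.l (bot_le : (⊥ : I) ≤ q) bot_le h le_rfl).range := by
    rw [X.exact_ij h]; exact AddMonoidHom.mem_ker.mpr hx
  exact AddMonoidHom.mem_range.mp hmem

lemma j_i_zero {p q : I} (h : q ≤ p) (y : X.D q) : X.j h (X.i h y) = 0 := by
  have hmem : X.i h y ∈ (X.l (bot_le : (⊥ : I) ≤ p) h le_rfl bot_le).ker := by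
    rw [← X.exact_ij h]; exact ⟨y, rfl⟩
  exact AddMonoidHom.mem_ker.mp hmem

lemma exists_j_of_k_eq_zero {p q : I} (h : q ≤ p) {x : X.E p q h} (hx : X.k h x = 0) :
    ∃ y, X.j h y = x := by
  have hmem : x ∈ (X.l (bot_le : (⊥ : I) ≤ p) h le_rfl bot_le).range := by
    rw [X.exact_jk h]; exact AddMonoidHom.mem_ker.mpr hx
  exact AddMonoidHom.mem_range.mp hmem

lemma k_j_zero {p q : I} (h : q ≤ p) (y : X.D p) : X.k h (X.j h y) = 0 := by
  have hmem : X.j h y ∈ (X.k h).ker := by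
    rw [← X.exact_jk h]; exact ⟨y, rfl⟩
  exact AddMonoidHom.mem_ker.mp hmem

lemma exists_k_of_i_eq_zero {p q : I} (h : q ≤ p) {x : X.D q} (hx : X.i h x = 0) :
    ∃ y, X.k h y = x := by
  have hmem : x ∈ (X.k h).range := by
    rw [X.exact_ki h]; exact AddMonoidHom.mem_ker.mpr hx
  exact AddMonoidHom.mem_range.mp hmem

lemma i_k_zero {p q : I} (h : q ≤ p) (y : X.E p q h) : X.i h (X.k h y) = 0 := by
  have hmem : X.k h y ∈ (X.l (bot_le : (⊥ : I) ≤ q) bot_le h le_rfl).ker := by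
    rw [← X.exact_ki h]; exact ⟨y, rfl⟩
  exact AddMonoidHom.mem_ker.mp hmem

lemma E_self_eq_zero {p : I} (x : X.E p p le_rfl) : x = 0 := by
  have hk : X.k le_rfl x = 0 :=
    (X.i_id (X.k le_rfl x)).symm.trans (X.i_k_zero le_rfl x)
  obtain ⟨y, hy⟩ := X.exists_j_of_k_eq_zero le_rfl hk
  rw [← hy, ← X.i_id y]
  exact X.j_i_zero le_rfl y

lemma l_zero {p q r : I} (hqp : q ≤ p) (hpr : p ≤ r) (x : X.E p q hqp) :
    X.l hqp hpr hpr hqp x = 0 := by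
  have h1 := X.l_l hqp le_rfl hpr le_rfl hqp hpr le_rfl x
  calc X.l hqp hpr hpr hqp x
      = X.l le_rfl hpr hpr le_rfl (X.l hqp le_rfl le_rfl hqp x) := h1.symm
    _ = 0 := by rw [X.E_self_eq_zero (X.l hqp le_rfl le_rfl hqp x)]; exact map_zero _

/-- Exactness of `E^{p2}_{p1} → E^{p3}_{p1} → E^{p3}_{p2}` at the middle term. -/
lemma ker_l_sub_range_l {p1 p2 p3 : I} (h1 : p1 ≤ p2) (h2 : p2 ≤ p3)
    {y : X.E p3 p1 (h1.trans h2)} (hy : X.l (h1.trans h2) h2 le_rfl h1 y = 0) :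
    ∃ c : X.E p2 p1 h1, X.l h1 (h1.trans h2) h2 le_rfl c = y := by
  have h3 : X.i h1 (X.k (h1.trans h2) y) = 0 := by
    rw [X.i_k (h1.trans h2) h2 le_rfl h1 y, hy, map_zero]
  obtain ⟨c0, hc0⟩ := X.exists_k_of_i_eq_zero h1 h3
  have h4 : X.k (h1.trans h2) (y - X.l h1 (h1.trans h2) h2 le_rfl c0) = 0 := by
    rw [map_sub, X.k_l_self h1 (h1.trans h2) h2 c0, hc0, sub_self]
  obtain ⟨a, ha⟩ := X.exists_j_of_k_eq_zero (h1.trans h2) h4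
  have h5 : X.j h2 a = 0 := by
    have h6 := X.l_j (h1.trans h2) h2 le_rfl h1 a
    have h7 : X.i (le_refl p3) a = a := X.i_id a
    rw [h7] at h6
    rw [← h6, ha, map_sub, hy, X.l_l h1 (h1.trans h2) h2 h2 le_rfl le_rfl h1 c0,
      zero_sub, X.l_zero h1 h2 c0, neg_zero]
  obtain ⟨e, he⟩ := X.exists_i_of_j_eq_zero h2 h5
  refine ⟨c0 + X.j h1 e, ?_⟩
  rw [map_add, X.l_j h1 (h1.trans h2) h2 le_rfl e]
  have h8 : X.j (h1.trans h2) (X.i h2 e) = X.j (h1.trans h2) a := by rw [he]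
  rw [h8, ha]
  abel

end ExactCoupleSystem

/-- Extensions: for `z ≤ p1 ≤ p2 ≤ p3 ≤ b`, the maps `ℓ` send kernels of
the differentials into kernels and images into images, hence induce homomorphisms
`S^{p2,z}_{b,p1} → S^{p3,z}_{b,p1}` and `S^{p3,z}_{b,p1} → S^{p3,z}_{b,p2}`, and
`0 → S^{p2,z}_{b,p1} → S^{p3,z}_{b,p1} → S^{p3,z}_{b,p2} → 0` is exact. -/
theorem statement10 {I : Type u} [PartialOrder I] [BoundedOrder I]
    (X : ExactCoupleSystem.{u, v} I) {z p1 p2 p3 b : I}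
    (hz1 : z ≤ p1) (h12 : p1 ≤ p2) (h23 : p2 ≤ p3) (h3b : p3 ≤ b) :
    (∀ x ∈ (X.dd hz1 h12).ker,
      X.l h12 (h12.trans h23) h23 le_rfl x ∈ (X.dd hz1 (h12.trans h23)).ker) ∧
    (∀ x ∈ (X.dd h12 (h23.trans h3b)).range,
      X.l h12 (h12.trans h23) h23 le_rfl x ∈ (X.dd (h12.trans h23) h3b).range) ∧
    (∀ x ∈ (X.dd hz1 (h12.trans h23)).ker,
      X.l (h12.trans h23) h23 le_rfl h12 x ∈ (X.dd (hz1.trans h12) h23).ker) ∧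
    (∀ x ∈ (X.dd (h12.trans h23) h3b).range,
      X.l (h12.trans h23) h23 le_rfl h12 x ∈ (X.dd h23 h3b).range) ∧
    ∃ (f : X.Sterm hz1 h12 (h23.trans h3b) →+ X.Sterm hz1 (h12.trans h23) h3b)
      (g : X.Sterm hz1 (h12.trans h23) h3b →+ X.Sterm (hz1.trans h12) h23 h3b),
      (∀ (x : X.E p2 p1 h12) (hx : x ∈ (X.dd hz1 h12).ker)
        (hx' : X.l h12 (h12.trans h23) h23 le_rfl x ∈ (X.dd hz1 (h12.trans h23)).ker),
        f (X.Scls hz1 h12 (h23.trans h3b) hx) = X.Scls hz1 (h12.trans h23) h3b hx') ∧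
      (∀ (x : X.E p3 p1 (h12.trans h23)) (hx : x ∈ (X.dd hz1 (h12.trans h23)).ker)
        (hx' : X.l (h12.trans h23) h23 le_rfl h12 x ∈ (X.dd (hz1.trans h12) h23).ker),
        g (X.Scls hz1 (h12.trans h23) h3b hx) = X.Scls (hz1.trans h12) h23 h3b hx') ∧
      Injective f ∧ f.range = g.ker ∧ Surjective g := by
  have claim1 : ∀ x ∈ (X.dd hz1 h12).ker,
      X.l h12 (h12.trans h23) h23 le_rfl x ∈ (X.dd hz1 (h12.trans h23)).ker := by
    intro x hx
    rw [AddMonoidHom.mem_ker] at hx ⊢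
    rw [X.dd_apply] at hx ⊢
    rw [X.k_l_self h12 (h12.trans h23) h23 x]
    exact hx
  have claim2 : ∀ x ∈ (X.dd h12 (h23.trans h3b)).range,
      X.l h12 (h12.trans h23) h23 le_rfl x ∈ (X.dd (h12.trans h23) h3b).range := by
    rintro x ⟨y, rfl⟩
    refine ⟨X.l (h23.trans h3b) h3b le_rfl h23 y, ?_⟩
    rw [X.dd_apply, X.dd_apply, ← X.i_k (h23.trans h3b) h3b le_rfl h23 y,
      X.l_j h12 (h12.trans h23) h23 le_rfl]
  have claim3 : ∀ x ∈ (X.dd hz1 (h12.trans h23)).ker,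
      X.l (h12.trans h23) h23 le_rfl h12 x ∈ (X.dd (hz1.trans h12) h23).ker := by
    intro x hx
    rw [AddMonoidHom.mem_ker] at hx ⊢
    rw [X.dd_apply] at hx ⊢
    rw [← X.i_k (h12.trans h23) h23 le_rfl h12 x,
      ← X.l_j hz1 (hz1.trans h12) h12 le_rfl (X.k (h12.trans h23) x), hx, map_zero]
  have claim4 : ∀ x ∈ (X.dd (h12.trans h23) h3b).range,
      X.l (h12.trans h23) h23 le_rfl h12 x ∈ (X.dd h23 h3b).range := by
    rintro x ⟨y, rfl⟩
    refine ⟨y, ?_⟩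
    rw [X.dd_apply, X.dd_apply, X.l_j (h12.trans h23) h23 le_rfl h12 (X.k h3b y),
      X.i_id]
  refine ⟨claim1, claim2, claim3, claim4, ?_⟩
  set K1 := (X.dd hz1 h12).ker with hK1
  set K2 := (X.dd hz1 (h12.trans h23)).ker with hK2
  set K3 := (X.dd (hz1.trans h12) h23).ker with hK3
  set R1 := (X.dd h12 (h23.trans h3b)).range with hR1
  set R2 := (X.dd (h12.trans h23) h3b).range with hR2
  set R3 := (X.dd h23 h3b).range with hR3
  let φ : ↥K1 →+ ↥K2 :=
    ((X.l h12 (h12.trans h23) h23 le_rfl).comp K1.subtype).codRestrict K2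
      (fun x => claim1 x.1 x.2)
  let ψ : ↥K2 →+ ↥K3 :=
    ((X.l (h12.trans h23) h23 le_rfl h12).comp K2.subtype).codRestrict K3
      (fun x => claim3 x.1 x.2)
  have hφcond : R1.addSubgroupOf K1 ≤ (R2.addSubgroupOf K2).comap φ := by
    intro x hx
    rw [AddSubgroup.mem_addSubgroupOf] at hx
    rw [AddSubgroup.mem_comap, AddSubgroup.mem_addSubgroupOf]
    exact claim2 x.1 hx
  have hψcond : R2.addSubgroupOf K2 ≤ (R3.addSubgroupOf K3).comap ψ := by
    intro x hx
    rw [AddSubgroup.mem_addSubgroupOf] at hx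
    rw [AddSubgroup.mem_comap, AddSubgroup.mem_addSubgroupOf]
    exact claim4 x.1 hx
  let f : X.Sterm hz1 h12 (h23.trans h3b) →+ X.Sterm hz1 (h12.trans h23) h3b :=
    QuotientAddGroup.map (R1.addSubgroupOf K1) (R2.addSubgroupOf K2) φ hφcond
  let g : X.Sterm hz1 (h12.trans h23) h3b →+ X.Sterm (hz1.trans h12) h23 h3b :=
    QuotientAddGroup.map (R2.addSubgroupOf K2) (R3.addSubgroupOf K3) ψ hψcond
  have hf_mk : ∀ (x : ↥K1), f (QuotientAddGroup.mk x) = QuotientAddGroup.mk (φ x) :=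
    fun x => QuotientAddGroup.map_mk _ _ φ hφcond x
  have hg_mk : ∀ (x : ↥K2), g (QuotientAddGroup.mk x) = QuotientAddGroup.mk (ψ x) :=
    fun x => QuotientAddGroup.map_mk _ _ ψ hψcond x
  refine ⟨f, g, ?_, ?_, ?_, ?_, ?_⟩
  · -- f on classes
    intro x hx hx'
    exact (hf_mk ⟨x, hx⟩).trans rfl
  · -- g on classes
    intro x hx hx'
    exact (hg_mk ⟨x, hx⟩).trans rfl
  · -- injectivity of f
    rw [injective_iff_map_eq_zero]
    intro a
    induction a using QuotientAddGroup.induction_on with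
    | H x =>
      intro ha
      rw [hf_mk x, QuotientAddGroup.eq_zero_iff, AddSubgroup.mem_addSubgroupOf] at ha
      have ha2 : X.l h12 (h12.trans h23) h23 le_rfl x.1 ∈ R2 := ha
      obtain ⟨y, hy⟩ := ha2
      rw [X.dd_apply] at hy
      -- hy : j_{p3,p1} (k_{b,p3} y) = ℓ x
      have hkx : X.k h12 x.1 = 0 := by
        rw [← X.k_l_self h12 (h12.trans h23) h23 x.1, ← hy,
          X.k_j_zero (h12.trans h23) (X.k h3b y)]
      obtain ⟨v, hv⟩ := X.exists_j_of_k_eq_zero h12 hkx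
      have hjv : X.j (h12.trans h23) (X.k h3b y - X.i h23 v) = 0 := by
        rw [map_sub, hy, ← hv, X.l_j h12 (h12.trans h23) h23 le_rfl v, sub_self]
      obtain ⟨w, hw⟩ := X.exists_i_of_j_eq_zero (h12.trans h23) hjv
      have hjv' : X.j h12 (v + X.i h12 w) = x.1 := by
        rw [map_add, hv, X.j_i_zero h12 w, add_zero]
      have hiv' : X.i (h23.trans h3b) (v + X.i h12 w) = 0 := by
        rw [← X.i_i h23 h3b (v + X.i h12 w), map_add, X.i_i h12 h23 w, hw]
        have : X.i h23 v + (X.k h3b y - X.i h23 v) = X.k h3b y := by abel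
        rw [this, X.i_k_zero h3b y]
      obtain ⟨t, ht⟩ := X.exists_k_of_i_eq_zero (h23.trans h3b) hiv'
      rw [QuotientAddGroup.eq_zero_iff, AddSubgroup.mem_addSubgroupOf]
      exact ⟨t, by rw [X.dd_apply, ht, hjv']⟩
  · -- range f = ker g
    have hgf : ∀ b, g (f b) = 0 := by
      intro b
      induction b using QuotientAddGroup.induction_on with
      | H x =>
        rw [hf_mk x, hg_mk (φ x)]
        have hz : ψ (φ x) = 0 := by
          apply Subtype.ext
          show X.l (h12.trans h23) h23 le_rfl h12
            (X.l h12 (h12.trans h23) h23 le_rfl x.1) = 0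
          rw [X.l_l h12 (h12.trans h23) h23 h23 le_rfl le_rfl h12 x.1]
          exact X.l_zero h12 h23 x.1
        rw [hz]
        rfl
    ext a
    induction a using QuotientAddGroup.induction_on with
    | H y =>
      constructor
      · rintro ⟨c, hc⟩
        rw [AddMonoidHom.mem_ker, ← hc, hgf]
      · intro ha
        rw [AddMonoidHom.mem_ker, hg_mk y, QuotientAddGroup.eq_zero_iff,
          AddSubgroup.mem_addSubgroupOf] at ha
        have ha2 : X.l (h12.trans h23) h23 le_rfl h12 y.1 ∈ R3 := ha
        obtain ⟨t, ht⟩ := ha2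
        rw [X.dd_apply] at ht
        -- ht : j_{p3,p2}(k_{b,p3} t) = ℓ y
        have hker : X.l (h12.trans h23) h23 le_rfl h12
            (y.1 - X.j (h12.trans h23) (X.k h3b t)) = 0 := by
          rw [map_sub, X.l_j (h12.trans h23) h23 le_rfl h12 (X.k h3b t), X.i_id,
            ht, sub_self]
        obtain ⟨c, hc⟩ := X.ker_l_sub_range_l h12 h23 hker
        have hcK : c ∈ K1 := by
          rw [hK1, AddMonoidHom.mem_ker, X.dd_apply,
            ← X.k_l_self h12 (h12.trans h23) h23 c, hc, map_sub,
            X.k_j_zero (h12.trans h23) (X.k h3b t), sub_zero]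
          exact AddMonoidHom.mem_ker.mp y.2
        refine ⟨QuotientAddGroup.mk ⟨c, hcK⟩, ?_⟩
        rw [hf_mk ⟨c, hcK⟩]
        refine (QuotientAddGroup.eq).mpr ?_
        rw [AddSubgroup.mem_addSubgroupOf]
        refine ⟨t, ?_⟩
        show X.dd (h12.trans h23) h3b t =
          -(X.l h12 (h12.trans h23) h23 le_rfl c) + y.1
        rw [hc, X.dd_apply]
        abel
  · -- surjectivity of g
    intro a
    induction a using QuotientAddGroup.induction_on with
    | H x =>
      have hx : X.j (hz1.trans h12) (X.k h23 x.1) = 0 := AddMonoidHom.mem_ker.mp x.2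
      obtain ⟨s, hs⟩ := X.exists_i_of_j_eq_zero (hz1.trans h12) hx
      have hs' : X.i h12 (X.i hz1 s) = X.k h23 x.1 := by
        rw [X.i_i hz1 h12 s, hs]
      have h5 : X.i (h12.trans h23) (X.i hz1 s) = 0 := by
        rw [← X.i_i h12 h23 (X.i hz1 s), hs', X.i_k_zero h23 x.1]
      obtain ⟨x1, hx1⟩ := X.exists_k_of_i_eq_zero (h12.trans h23) h5
      have h6 : X.k h23 (x.1 - X.l (h12.trans h23) h23 le_rfl h12 x1) = 0 := by
        rw [map_sub, ← X.i_k (h12.trans h23) h23 le_rfl h12 x1, hx1, hs', sub_self]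
      obtain ⟨t, htt⟩ := X.exists_j_of_k_eq_zero h23 h6
      have hl2 : X.l (h12.trans h23) h23 le_rfl h12 (x1 + X.j (h12.trans h23) t)
          = x.1 := by
        rw [map_add, X.l_j (h12.trans h23) h23 le_rfl h12 t, X.i_id, htt]
        abel
      have hx2K : x1 + X.j (h12.trans h23) t ∈ K2 := by
        rw [hK2, AddMonoidHom.mem_ker, X.dd_apply, map_add,
          X.k_j_zero (h12.trans h23) t, add_zero, hx1]
        exact X.j_i_zero hz1 s
      refine ⟨QuotientAddGroup.mk ⟨x1 + X.j (h12.trans h23) t, hx2K⟩, ?_⟩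
      rw [hg_mk]
      exact congrArg QuotientAddGroup.mk (Subtype.ext hl2)
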